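/- In the cycle instance where p tokens each want to move q steps clockwise on a cycle of length pq, the quantity total(K) (sum of distances from start to target over all tokens) equals pq, and hence for every δ > 0 there exist p, q such that the optimal number of swaps exceeds (2 − δ)·total(K). -/

import Mathlib

set_option linter.unusedSectionVars false
set_option linter.unusedVariables false
set_option maxHeartbeats 1000000

/-- Apply a list of swaps to a configuration `f : T ≃ V`. -/
noncomputable def applySwaps {V T : Type*} (f : T ≃ V) (s : List (V × V)) : T ≃ V :=
  letI := Classical.decEq V
  s.foldl (fun g e => g.trans (Equiv.swap e.1 e.2)) f

/-- The cycle graph on `ZMod n`: `v` adjacent to `v + 1`. -/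
def cycleG (n : ℕ) : SimpleGraph (ZMod n) :=
  SimpleGraph.fromRel (fun a b => b = a + 1)

/-- Minimum length of a swap sequence on `G` transforming `f1` into `f2`. -/
noncomputable def swOPT {V T : Type*} (G : SimpleGraph V) (f1 f2 : T ≃ V) : ℕ :=
  sInf {k | ∃ s : List (V × V),
    (∀ e ∈ s, G.Adj e.1 e.2) ∧ applySwaps f1 s = f2 ∧ s.length = k}

/-- `total(K)`: sum over tokens of the distance from start to target vertex,
for the instance on the cycle of length `n` with starting configuration the
identity and target configuration `π`. -/
noncomputable def totalCycle (n : ℕ) (π : Equiv.Perm (ZMod n)) : ℕ :=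
  if h : n = 0 then 0
  else
    letI : NeZero n := ⟨h⟩
    ∑ v : ZMod n, (cycleG n).dist v (π v)

/-- `π` is the permutation where, for each `0 ≤ i ≤ p-1`, the token starting on
`v_{iq}` has target `v_{(i+1)q mod pq}` and every other token is fixed. -/
def IsShiftPerm (p q : ℕ) (π : Equiv.Perm (ZMod (p * q))) : Prop :=
  (∀ i < p, π ((i * q : ℕ) : ZMod (p * q)) = (((i + 1) * q : ℕ) : ZMod (p * q))) ∧
  (∀ v : ZMod (p * q), (∀ i < p, v ≠ ((i * q : ℕ) : ZMod (p * q))) → π v = v)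

open SimpleGraph Finset

lemma cyc_adj {n : ℕ} {a b : ZMod n} : (cycleG n).Adj a b ↔ a ≠ b ∧ (b = a + 1 ∨ a = b + 1) :=
  SimpleGraph.fromRel_adj _ a b

lemma cyc_adj' {n : ℕ} {a : ZMod n} (h : (1 : ZMod n) ≠ 0) : (cycleG n).Adj a (a + 1) := by
  rw [cyc_adj]
  exact ⟨fun hh => h (by linear_combination -hh), Or.inl rfl⟩

lemma one_ne_zero_zmod {n : ℕ} (hn : 2 ≤ n) : (1 : ZMod n) ≠ 0 := by
  intro h
  haveI : NeZero n := ⟨by omega⟩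
  have hc : ((1:ℕ) : ZMod n) = 0 := by push_cast; exact h
  rw [ZMod.natCast_eq_zero_iff] at hc
  have := Nat.le_of_dvd one_pos hc
  omega

lemma cyc_walk {n : ℕ} (hn : 2 ≤ n) (a : ZMod n) (k : ℕ) :
    ∃ w : (cycleG n).Walk a (a + (k : ZMod n)), w.length = k := by
  induction k with
  | zero => exact ⟨(Walk.nil : (cycleG n).Walk a a).copy rfl (by simp), by simp⟩
  | succ k ih =>
    obtain ⟨w, hw⟩ := ih
    have hadj : (cycleG n).Adj (a + (k : ZMod n)) (a + ((k+1 : ℕ) : ZMod n)) := by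
      have hk : a + ((k+1 : ℕ) : ZMod n) = (a + (k : ZMod n)) + 1 := by push_cast; ring
      rw [hk]
      exact cyc_adj' (one_ne_zero_zmod hn)
    exact ⟨w.concat hadj, by simp [hw]⟩

lemma walk_lift {n : ℕ} {a b : ZMod n} (w : (cycleG n).Walk a b) :
    ∃ s : ℤ, |s| ≤ (w.length : ℤ) ∧ (s : ZMod n) = b - a := by
  induction w with
  | nil => exact ⟨0, by simp, by simp⟩
  | @cons a c b h p ih =>
    obtain ⟨s, hs, hcast⟩ := ih
    rw [cyc_adj] at h
    rcases h.2 with h1 | h1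
    · refine ⟨s + 1, ?_, ?_⟩
      · simp only [Walk.length_cons]
        have h2 : |s + 1| ≤ |s| + |(1:ℤ)| := abs_add_le s 1
        push_cast
        simp at h2; omega
      · push_cast [hcast]
        rw [h1]; ring
    · refine ⟨s - 1, ?_, ?_⟩
      · simp only [Walk.length_cons]
        have h2 : |s - 1| ≤ |s| + |(1:ℤ)| := abs_sub s 1
        push_cast
        simp at h2; omega
      · push_cast [hcast]
        rw [h1]; ring

lemma cyc_dist {n q : ℕ} (h1 : 1 ≤ q) (h2 : 2*q ≤ n) (v : ZMod n) :
    (cycleG n).dist v (v + (q : ZMod n)) = q := by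
  have hn : 2 ≤ n := by omega
  obtain ⟨w, hw⟩ := cyc_walk hn v q
  have hub : (cycleG n).dist v (v + (q : ZMod n)) ≤ q := by
    have := SimpleGraph.dist_le w
    omega
  have hreach : (cycleG n).Reachable v (v + (q : ZMod n)) := ⟨w⟩
  obtain ⟨w', hw'⟩ := hreach.exists_walk_length_eq_dist
  obtain ⟨s, hs, hcast⟩ := walk_lift w'
  have hdvd : (n : ℤ) ∣ (s - q) := by
    rw [← ZMod.intCast_zmod_eq_zero_iff_dvd]
    push_cast [hcast]
    ring
  by_contra hne
  have hlt : (cycleG n).dist v (v + (q : ZMod n)) < q := lt_of_le_of_ne hub hne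
  rw [hw'] at hs
  have hsq : s ≠ (q : ℤ) := by
    intro h; rw [h] at hs; simp at hs; omega
  have hdvd2 : (n : ℤ) ∣ |s - q| := (dvd_abs _ _).mpr hdvd
  have hge : (n : ℤ) ≤ |s - q| :=
    Int.le_of_dvd (abs_pos.mpr (sub_ne_zero.mpr hsq)) hdvd2
  have hb := abs_le.mp hs
  rcases abs_cases (s - (q:ℤ)) with ⟨h3, _⟩ | ⟨h3, _⟩ <;> omega

lemma part1 (p q : ℕ) (hp : 2 ≤ p) (hq : 1 ≤ q) (π : Equiv.Perm (ZMod (p*q)))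
    (hπ : IsShiftPerm p q π) : totalCycle (p*q) π = p*q := by
  have hn : p * q ≠ 0 := by positivity
  haveI : NeZero (p*q) := ⟨hn⟩
  rw [totalCycle, dif_neg hn]
  set S : Finset (ZMod (p*q)) := (Finset.range p).image (fun i => ((i*q : ℕ) : ZMod (p*q))) with hS
  have hval : ∀ i < p, (((i*q : ℕ) : ZMod (p*q))).val = i * q := by
    intro i hi
    exact ZMod.val_cast_of_lt (mul_lt_mul_of_pos_right hi (by omega))
  have hinj : ∀ i ∈ Finset.range p, ∀ j ∈ Finset.range p,
      ((i*q : ℕ) : ZMod (p*q)) = ((j*q : ℕ) : ZMod (p*q)) → i = j := by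
    intro i hi j hj h
    simp only [Finset.mem_range] at hi hj
    have := congrArg ZMod.val h
    rw [hval i hi, hval j hj] at this
    exact Nat.eq_of_mul_eq_mul_right (by omega) this
  have hsplit := Finset.sum_add_sum_compl S (fun v => (cycleG (p*q)).dist v (π v))
  have hcompl : ∑ v ∈ Sᶜ, (cycleG (p*q)).dist v (π v) = 0 := by
    apply Finset.sum_eq_zero
    intro v hv
    have hfix : π v = v := by
      apply hπ.2
      intro i hi hne
      rw [Finset.mem_compl, hS] at hv
      exact hv (Finset.mem_image.mpr ⟨i, Finset.mem_range.mpr hi, hne.symm⟩)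
    rw [hfix, SimpleGraph.dist_self]
  have hmain : ∑ v ∈ S, (cycleG (p*q)).dist v (π v) = p * q := by
    rw [hS, Finset.sum_image hinj]
    have hterm : ∀ i ∈ Finset.range p,
        (cycleG (p*q)).dist ((i*q : ℕ) : ZMod (p*q)) (π ((i*q : ℕ) : ZMod (p*q))) = q := by
      intro i hi
      simp only [Finset.mem_range] at hi
      rw [hπ.1 i hi]
      have hcast : (((i+1)*q : ℕ) : ZMod (p*q)) = ((i*q : ℕ) : ZMod (p*q)) + (q : ZMod (p*q)) := by
        push_cast; ring
      rw [hcast]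
      exact cyc_dist hq (by nlinarith) _
    rw [Finset.sum_congr rfl hterm, Finset.sum_const, Finset.card_range, smul_eq_mul]
  omega

section
variable (L : ℕ) (hL : 2 ≤ L)

lemma nz (hL : 2 ≤ L) : NeZero (L*L) := ⟨by positivity⟩

lemma spec_add (hL : 2 ≤ L) (v : ZMod (L*L)) :
    L ∣ (v + (L : ZMod (L*L))).val ↔ L ∣ v.val := by
  haveI := nz L hL
  have hLval : ((L : ℕ) : ZMod (L*L)).val = L := ZMod.val_cast_of_lt (by nlinarith)
  rw [ZMod.val_add, hLval, Nat.dvd_mod_iff (Dvd.intro L rfl)]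
  exact Nat.dvd_add_self_right

def shPerm (hL : 2 ≤ L) : Equiv.Perm (ZMod (L*L)) where
  toFun v := if L ∣ v.val then v + L else v
  invFun v := if L ∣ v.val then v - L else v
  left_inv v := by
    by_cases h : L ∣ v.val
    · simp only [h, if_pos, (spec_add L hL v).mpr h, if_pos]
      ring
    · simp only [h, if_neg, if_false, if_neg h]
  right_inv v := by
    by_cases h : L ∣ v.val
    · have h2 : L ∣ (v - (L : ZMod (L*L))).val := by
        have := (spec_add L hL (v - (L : ZMod (L*L)))).mp
        simp only [sub_add_cancel] at this
        exact this h
      simp only [h, if_pos, h2, if_pos]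
      ring
    · simp only [h, if_neg, if_false, if_neg h]

lemma shPerm_apply (hL : 2 ≤ L) (v : ZMod (L*L)) :
    shPerm L hL v = if L ∣ v.val then v + L else v := rfl

lemma val_mul_cast (hL : 2 ≤ L) {i : ℕ} (hi : i < L) :
    (((i * L : ℕ) : ZMod (L*L))).val = i * L := by
  haveI := nz L hL
  exact ZMod.val_cast_of_lt (by exact mul_lt_mul_of_pos_right hi (by omega))

lemma shPerm_shift (hL : 2 ≤ L) : IsShiftPerm L L (shPerm L hL) := by
  haveI := nz L hL
  constructor
  · intro i hi
    rw [shPerm_apply]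
    rw [if_pos (by rw [val_mul_cast L hL hi]; exact Dvd.intro_left i rfl)]
    push_cast; ring
  · intro v hv
    rw [shPerm_apply, if_neg]
    intro hdvd
    obtain ⟨c, hc⟩ := hdvd
    have hcv : ((v.val : ℕ) : ZMod (L*L)) = v := by rw [ZMod.natCast_val, ZMod.cast_id]
    have hclt : c < L := by
      have := ZMod.val_lt v
      nlinarith [this, hc]
    exact hv c hclt (by rw [← hcv, hc, mul_comm L c])
end

section
variable {V T : Type*} [DecidableEq V]

lemma applySwaps_nil (f : T ≃ V) : applySwaps f [] = f := rfl

lemma applySwaps_cons (f : T ≃ V) (e : V × V) (s : List (V × V)) :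
    applySwaps f (e :: s) = applySwaps (f.trans (Equiv.swap e.1 e.2)) s := by
  simp only [applySwaps, List.foldl_cons]
  congr!

lemma applySwaps_trans' (s : List (V × V)) (f : T ≃ V) (g : V ≃ V) :
    applySwaps (f.trans g) s = f.trans (applySwaps g s) := by
  induction s generalizing g with
  | nil => simp [applySwaps_nil]
  | cons e s ih =>
    rw [applySwaps_cons, applySwaps_cons, Equiv.trans_assoc, ih]

lemma applySwaps_trans (s : List (V × V)) (f : T ≃ V) :
    applySwaps f s = f.trans (applySwaps (Equiv.refl V) s) := by
  calc applySwaps f s = applySwaps (f.trans (Equiv.refl V)) s := by rw [Equiv.trans_refl]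
    _ = f.trans (applySwaps (Equiv.refl V) s) := applySwaps_trans' _ _ _

lemma applySwaps_append (f : T ≃ V) (s t : List (V × V)) :
    applySwaps f (s ++ t) = applySwaps (applySwaps f s) t := by
  simp only [applySwaps, List.foldl_append]

end

lemma exists_swapList_swap {n : ℕ} (hn : 2 ≤ n) {x y : ZMod n} (hxy : x ≠ y) :
    ∃ s : List (ZMod n × ZMod n), (∀ e ∈ s, (cycleG n).Adj e.1 e.2) ∧
      applySwaps (Equiv.refl (ZMod n)) s = Equiv.swap x y := by
  haveI : NeZero n := ⟨by omega⟩
  have key : ∀ k : ℕ, 1 ≤ k → k < n → ∀ x : ZMod n,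
      ∃ s : List (ZMod n × ZMod n), (∀ e ∈ s, (cycleG n).Adj e.1 e.2) ∧
        applySwaps (Equiv.refl (ZMod n)) s = Equiv.swap x (x + (k : ZMod n)) := by
    intro k
    induction k with
    | zero => omega
    | succ k ih =>
      intro _ hklt x
      rcases Nat.eq_or_lt_of_le (show 1 ≤ k + 1 by omega) with h1 | h1
      · -- k + 1 = 1
        have hk0 : k = 0 := by omega
        subst hk0
        refine ⟨[(x, x + 1)], ?_, ?_⟩
        · intro e he
          rw [List.mem_singleton] at he
          subst he
          exact cyc_adj' (one_ne_zero_zmod hn)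
        · rw [applySwaps_cons, applySwaps_nil, Equiv.refl_trans]
          norm_num
      · -- k ≥ 1
        obtain ⟨s, hadj, hs⟩ := ih (by omega) (by omega) x
        set a : ZMod n := x + (k : ZMod n) with ha
        set b : ZMod n := x + ((k+1 : ℕ) : ZMod n) with hb
        have hab : b = a + 1 := by rw [ha, hb]; push_cast; ring
        have hxa : x ≠ a := by
          rw [ha]
          intro h
          have : ((k:ℕ) : ZMod n) = 0 := by linear_combination -h
          rw [ZMod.natCast_eq_zero_iff] at this
          have := Nat.le_of_dvd (by omega) this
          omega
        have hxb : x ≠ b := by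
          rw [hb]
          intro h
          have : ((k+1:ℕ) : ZMod n) = 0 := by linear_combination -h
          rw [ZMod.natCast_eq_zero_iff] at this
          have := Nat.le_of_dvd (by omega) this
          omega
        have hadjab : (cycleG n).Adj a b := by rw [hab]; exact cyc_adj' (one_ne_zero_zmod hn)
        refine ⟨[(a, b)] ++ s ++ [(a, b)], ?_, ?_⟩
        · intro e he
          simp only [List.mem_append, List.mem_singleton] at he
          rcases he with (he | he) | he
          · subst he; exact hadjab
          · exact hadj e he
          · subst he; exact hadjab
        · have h1 : applySwaps (Equiv.refl (ZMod n)) [(a,b)] = Equiv.swap a b := by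
            rw [applySwaps_cons, applySwaps_nil, Equiv.refl_trans]
          rw [applySwaps_append, applySwaps_append, h1, applySwaps_trans s, hs,
            applySwaps_cons, applySwaps_nil]
          have hmul := Equiv.swap_mul_swap_mul_swap (x := x) (y := a) (z := b) hxa hxb
          calc ((Equiv.swap a b).trans (Equiv.swap x a)).trans (Equiv.swap a b)
              = Equiv.swap a b * Equiv.swap x a * Equiv.swap a b := rfl
            _ = Equiv.swap b x := hmul
            _ = Equiv.swap x b := Equiv.swap_comm _ _
  have hyx : y - x ≠ 0 := sub_ne_zero.mpr (Ne.symm hxy)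
  have hk1 : 1 ≤ (y - x).val := by
    rcases Nat.eq_zero_or_pos (y - x).val with h | h
    · exact absurd ((ZMod.val_eq_zero _).mp h) hyx
    · exact h
  obtain ⟨s, hadj, hs⟩ := key (y - x).val hk1 (ZMod.val_lt _) x
  refine ⟨s, hadj, ?_⟩
  rw [hs]
  congr 1
  rw [ZMod.natCast_val, ZMod.cast_id]
  ring

lemma exists_swapList {n : ℕ} (hn : 2 ≤ n) (π : Equiv.Perm (ZMod n)) :
    ∃ s : List (ZMod n × ZMod n), (∀ e ∈ s, (cycleG n).Adj e.1 e.2) ∧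
      applySwaps (Equiv.refl (ZMod n)) s = π := by
  haveI : NeZero n := ⟨by omega⟩
  induction π using Equiv.Perm.swap_induction_on
  case _ => exact ⟨[], by simp, rfl⟩
  case _ f x y hxy hf =>
    obtain ⟨s, hadj, hs⟩ := hf
    obtain ⟨t, tadj, ht⟩ := exists_swapList_swap hn hxy
    refine ⟨s ++ t, ?_, ?_⟩
    · intro e he
      rcases List.mem_append.mp he with h | h
      · exact hadj e h
      · exact tadj e h
    · rw [applySwaps_append, hs, applySwaps_trans, ht]
      rfl

lemma ediv_succ_eq {n : ℕ} (hn : 0 < n) (y : ℤ) (h : ¬ ((n:ℤ) ∣ y + 1)) :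
    (y+1)/(n:ℤ) = y/(n:ℤ) := by
  have hn' : (0:ℤ) < n := by exact_mod_cast hn
  have hq := Int.mul_ediv_add_emod y n
  set q := y / (n:ℤ)
  set r := y % (n:ℤ) with hr
  have hr0 : 0 ≤ r := Int.emod_nonneg y (by omega)
  have hrn : r < n := Int.emod_lt_of_pos y hn'
  have hrtop : r + 1 < n := by
    rcases lt_or_eq_of_le (by omega : r + 1 ≤ n) with h' | h'
    · exact h'
    · exfalso; apply h; exact ⟨q + 1, by linarith [hq]⟩
  have : y + 1 = (r + 1) + q * n := by linarith
  rw [this, Int.add_mul_ediv_right _ _ (by omega : (n:ℤ) ≠ 0),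
    Int.ediv_eq_zero_of_lt (by omega) (by omega)]
  omega

lemma ediv_pred_eq {n : ℕ} (hn : 0 < n) (y : ℤ) (h : ¬ ((n:ℤ) ∣ y)) :
    (y-1)/(n:ℤ) = y/(n:ℤ) := by
  have := ediv_succ_eq hn (y - 1) (by simpa using h)
  simpa using this.symm

lemma ediv_shift_bound {n : ℕ} (hn : 0 < n) (y d : ℤ) (hd : |d| ≤ n) :
    |(y+d)/(n:ℤ) - y/(n:ℤ)| ≤ 1 := by
  have hn' : (0:ℤ) < n := by exact_mod_cast hn
  have h1 : (y + d)/(n:ℤ) ≤ y/(n:ℤ) + 1 := by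
    have : (y + d) ≤ y + 1 * n := by rcases abs_le.mp hd with ⟨_, h2⟩; linarith
    calc (y+d)/(n:ℤ) ≤ (y + 1*(n:ℤ))/(n:ℤ) := Int.ediv_le_ediv hn' this
      _ = y/(n:ℤ) + 1 := Int.add_mul_ediv_right _ _ (by omega)
  have h2 : y/(n:ℤ) - 1 ≤ (y + d)/(n:ℤ) := by
    have : y + (-1) * n ≤ y + d := by rcases abs_le.mp hd with ⟨h2, _⟩; linarith
    calc y/(n:ℤ) - 1 = (y + (-1)*(n:ℤ))/(n:ℤ) := by
          rw [Int.add_mul_ediv_right _ _ (by omega : (n:ℤ) ≠ 0)]; ring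
      _ ≤ (y + d)/(n:ℤ) := Int.ediv_le_ediv hn' this
  rw [abs_le]
  omega

section
variable {n : ℕ} [NeZero n]

lemma diff_ne {g : ZMod n ≃ ZMod n} {x : ZMod n → ℤ}
    (hc : ∀ t, ((x t : ℤ) : ZMod n) = g t) {t t' : ZMod n} (h : t ≠ t') :
    ¬ ((n:ℤ) ∣ (x t - x t')) := by
  intro hdvd
  have : ((x t - x t' : ℤ) : ZMod n) = 0 := (ZMod.intCast_zmod_eq_zero_iff_dvd _ _).mpr hdvd
  push_cast at this
  rw [hc t, hc t'] at this
  exact h (g.injective (by linear_combination this))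

lemma step_lemma (hn : 2 ≤ n) (g : ZMod n ≃ ZMod n) (x : ZMod n → ℤ)
    (hc : ∀ t, ((x t : ℤ) : ZMod n) = g t) (e : ZMod n × ZMod n)
    (he : (cycleG n).Adj e.1 e.2) :
    ∃ x1 : ZMod n → ℤ, (∀ t, ((x1 t : ℤ) : ZMod n) = (g.trans (Equiv.swap e.1 e.2)) t) ∧
      (∑ t, x1 t = ∑ t, x t) ∧
      ∀ p : ZMod n × ZMod n, |(x1 p.1 - x1 p.2)/(n:ℤ) - (x p.1 - x p.2)/(n:ℤ)| ≤
        (if p = (g.symm e.1, g.symm e.2) then 1 else 0) +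
          (if p = (g.symm e.2, g.symm e.1) then 1 else 0) := by
  have hn0 : 0 < n := by omega
  obtain ⟨hne, hrel⟩ := (SimpleGraph.fromRel_adj _ e.1 e.2).mp he
  set a := g.symm e.1 with hadef
  set b := g.symm e.2 with hbdef
  have hab : a ≠ b := fun h => hne (by
    rw [← Equiv.apply_symm_apply g e.1, ← Equiv.apply_symm_apply g e.2, ← hadef, ← hbdef, h])
  set δ : ℤ := if e.2 = e.1 + 1 then 1 else -1 with hδ
  have hδcast : ((δ : ℤ) : ZMod n) = e.2 - e.1 := by
    by_cases h2 : e.2 = e.1 + 1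
    · rw [hδ, if_pos h2]; push_cast; rw [h2]; ring
    · rcases hrel with h1 | h1
      · exact absurd h1 h2
      · rw [hδ, if_neg h2]; push_cast; rw [h1]; ring
  have hδabs : |δ| = 1 := by
    by_cases h2 : e.2 = e.1 + 1
    · rw [hδ, if_pos h2]; norm_num
    · rw [hδ, if_neg h2]; norm_num
  set x1 : ZMod n → ℤ := Function.update (Function.update x a (x a + δ)) b (x b - δ) with hx1
  have hx1a : x1 a = x a + δ := by
    rw [hx1, Function.update_of_ne hab, Function.update_self]
  have hx1b : x1 b = x b - δ := by rw [hx1, Function.update_self]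
  have hx1o : ∀ t, t ≠ a → t ≠ b → x1 t = x t := by
    intro t hta htb
    rw [hx1, Function.update_of_ne htb, Function.update_of_ne hta]
  have hga : g a = e.1 := Equiv.apply_symm_apply g e.1
  have hgb : g b = e.2 := Equiv.apply_symm_apply g e.2
  have hc1 : ∀ t, ((x1 t : ℤ) : ZMod n) = (g.trans (Equiv.swap e.1 e.2)) t := by
    intro t
    simp only [Equiv.trans_apply]
    by_cases hta : t = a
    · subst hta
      rw [hx1a, hga, Equiv.swap_apply_left]
      push_cast
      rw [hc _, hga, hδcast]
      ring
    · by_cases htb : t = b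
      · subst htb
        rw [hx1b, hgb, Equiv.swap_apply_right]
        push_cast
        rw [hc _, hgb, hδcast]
        ring
      · rw [hx1o t hta htb, Equiv.swap_apply_of_ne_of_ne
          (fun h => hta (by rw [hadef, ← h, Equiv.symm_apply_apply]))
          (fun h => htb (by rw [hbdef, ← h, Equiv.symm_apply_apply])), hc t]
  have hdiff : ∀ t, x1 t - x t = (if t = a then δ else 0) + (if t = b then -δ else 0) := by
    intro t
    by_cases hta : t = a
    · subst hta
      rw [hx1a, if_pos rfl, if_neg hab]
      ring
    · by_cases htb : t = b
      · subst htb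
        rw [hx1b, if_neg hta, if_pos rfl]
        ring
      · rw [hx1o t hta htb, if_neg hta, if_neg htb]
        ring
  refine ⟨x1, hc1, ?_, ?_⟩
  · have hsum : ∑ t, (x1 t - x t) = 0 := by
      rw [Finset.sum_congr rfl (fun t _ => hdiff t), Finset.sum_add_distrib,
        Finset.sum_ite_eq' Finset.univ a (fun _ => δ),
        Finset.sum_ite_eq' Finset.univ b (fun _ => -δ)]
      simp
    rw [Finset.sum_sub_distrib] at hsum
    omega
  · -- per-pair bound
    have helper : ∀ u v : ZMod n, u ≠ v → ∀ ε : ℤ, |ε| = 1 →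
        x1 u - x1 v = x u - x v + ε →
        (x1 u - x1 v)/(n:ℤ) = (x u - x v)/(n:ℤ) := by
      intro u v huv ε hε heq
      rcases abs_eq (by norm_num : (0:ℤ) ≤ 1) |>.mp hε with h1 | h1
      · subst h1
        rw [heq]
        apply ediv_succ_eq hn0
        rw [← heq]
        exact diff_ne hc1 huv
      · subst h1
        have heq' : x1 u - x1 v = (x u - x v) - 1 := by linarith
        rw [heq']
        exact ediv_pred_eq hn0 _ (diff_ne hc huv)
    rintro ⟨p1, p2⟩
    have hRnn : (0:ℤ) ≤ (if ((p1,p2) : ZMod n × ZMod n) = (a, b) then 1 else 0) +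
        (if ((p1,p2) : ZMod n × ZMod n) = (b, a) then 1 else 0) := by positivity
    by_cases h1a : p1 = a
    · by_cases h2b : p2 = b
      · -- (a, b)
        have hch : x1 p1 - x1 p2 = (x p1 - x p2) + 2*δ := by
          rw [h1a, h2b, hx1a, hx1b]; ring
        have hb2 : |(2:ℤ)*δ| ≤ (n:ℤ) := by
          rw [abs_mul, hδabs]
          simp only [abs_two, mul_one]
          exact_mod_cast hn
        have hbd := ediv_shift_bound hn0 (x p1 - x p2) (2*δ) hb2
        rw [hch, if_pos (show ((p1,p2) : ZMod n × ZMod n) = (a,b) by rw [h1a, h2b])]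
        have h2 : (0:ℤ) ≤ (if ((p1,p2) : ZMod n × ZMod n) = (b, a) then 1 else 0) := by positivity
        rw [← hch]
        calc |(x1 p1 - x1 p2)/(n:ℤ) - (x p1 - x p2)/(n:ℤ)|
            = |(x p1 - x p2 + 2*δ)/(n:ℤ) - (x p1 - x p2)/(n:ℤ)| := by rw [hch]
          _ ≤ 1 := hbd
          _ ≤ _ := by omega
      · by_cases h2a : p2 = a
        · rw [h1a, h2a]
          simp only [sub_self, Int.zero_ediv, abs_zero]
          positivity
        · have hch : x1 p1 - x1 p2 = (x p1 - x p2) + δ := by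
            rw [h1a, hx1a, hx1o p2 h2a h2b]; ring
          rw [helper p1 p2 (by rw [h1a]; exact fun h => h2a h.symm) δ hδabs hch,
            sub_self, abs_zero]
          exact hRnn
    · by_cases h1b : p1 = b
      · by_cases h2a : p2 = a
        · -- (b, a)
          have hch : x1 p1 - x1 p2 = (x p1 - x p2) + (-2)*δ := by
            rw [h1b, h2a, hx1a, hx1b]; ring
          have hb2 : |(-2:ℤ)*δ| ≤ (n:ℤ) := by
            rw [abs_mul, hδabs]
            simp only [abs_neg, abs_two, mul_one]
            exact_mod_cast hn
          have hbd := ediv_shift_bound hn0 (x p1 - x p2) ((-2)*δ) hb2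
          rw [if_pos (show ((p1,p2) : ZMod n × ZMod n) = (b,a) by rw [h1b, h2a])]
          have h2 : (0:ℤ) ≤ (if ((p1,p2) : ZMod n × ZMod n) = (a, b) then 1 else 0) := by
            positivity
          calc |(x1 p1 - x1 p2)/(n:ℤ) - (x p1 - x p2)/(n:ℤ)|
              = |(x p1 - x p2 + (-2)*δ)/(n:ℤ) - (x p1 - x p2)/(n:ℤ)| := by rw [hch]
            _ ≤ 1 := hbd
            _ ≤ _ := by omega
        · by_cases h2b : p2 = b
          · rw [h1b, h2b]
            simp only [sub_self, Int.zero_ediv, abs_zero]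
            positivity
          · have hch : x1 p1 - x1 p2 = (x p1 - x p2) + (-δ) := by
              rw [h1b, hx1b, hx1o p2 h2a h2b]; ring
            rw [helper p1 p2 (by rw [h1b]; exact fun h => h2b h.symm) (-δ)
              (by rw [abs_neg]; exact hδabs) hch, sub_self, abs_zero]
            exact hRnn
      · by_cases h2a : p2 = a
        · have hch : x1 p1 - x1 p2 = (x p1 - x p2) + (-δ) := by
            rw [h2a, hx1a, hx1o p1 h1a h1b]; ring
          rw [helper p1 p2 (by rw [h2a]; exact h1a) (-δ)
            (by rw [abs_neg]; exact hδabs) hch, sub_self, abs_zero]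
          exact hRnn
        · by_cases h2b : p2 = b
          · have hch : x1 p1 - x1 p2 = (x p1 - x p2) + δ := by
              rw [h2b, hx1b, hx1o p1 h1a h1b]; ring
            rw [helper p1 p2 (by rw [h2b]; exact h1b) δ hδabs hch, sub_self, abs_zero]
            exact hRnn
          · rw [hx1o p1 h1a h1b, hx1o p2 h2a h2b, sub_self, abs_zero]
            exact hRnn

lemma crossing_bound (hn : 2 ≤ n) : ∀ (s : List (ZMod n × ZMod n)),
    (∀ e ∈ s, (cycleG n).Adj e.1 e.2) →
    ∀ (g : ZMod n ≃ ZMod n) (x : ZMod n → ℤ), (∀ t, ((x t : ℤ) : ZMod n) = g t) →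
    ∃ x' : ZMod n → ℤ, (∀ t, ((x' t : ℤ) : ZMod n) = applySwaps g s t) ∧
      (∑ t, x' t = ∑ t, x t) ∧
      (∑ p : ZMod n × ZMod n, |(x p.1 - x p.2)/(n:ℤ) - (x' p.1 - x' p.2)/(n:ℤ)|)
        ≤ 2 * s.length := by
  intro s
  induction s with
  | nil =>
    intro _ g x hc
    exact ⟨x, fun t => hc t, rfl, by simp⟩
  | cons e s ih =>
    intro hadj g x hc
    obtain ⟨x1, hc1, hsum1, hpair⟩ := step_lemma hn g x hc e (hadj e (by simp))
    obtain ⟨x', hc', hsum', hΦ⟩ := ih (fun e' he' => hadj e' (by simp [he'])) _ x1 hc1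
    refine ⟨x', ?_, by omega, ?_⟩
    · intro t
      rw [hc' t, applySwaps_cons]
    · have htri : ∀ p : ZMod n × ZMod n,
          |(x p.1 - x p.2)/(n:ℤ) - (x' p.1 - x' p.2)/(n:ℤ)| ≤
            |(x1 p.1 - x1 p.2)/(n:ℤ) - (x p.1 - x p.2)/(n:ℤ)| +
            |(x1 p.1 - x1 p.2)/(n:ℤ) - (x' p.1 - x' p.2)/(n:ℤ)| := by
        intro p
        have := abs_sub_le ((x p.1 - x p.2)/(n:ℤ)) ((x1 p.1 - x1 p.2)/(n:ℤ))
          ((x' p.1 - x' p.2)/(n:ℤ))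
        rw [abs_sub_comm ((x p.1 - x p.2)/(n:ℤ)) ((x1 p.1 - x1 p.2)/(n:ℤ))] at this
        exact this
      have hstep : (∑ p : ZMod n × ZMod n,
          |(x1 p.1 - x1 p.2)/(n:ℤ) - (x p.1 - x p.2)/(n:ℤ)|) ≤ 2 := by
        calc (∑ p : ZMod n × ZMod n, |(x1 p.1 - x1 p.2)/(n:ℤ) - (x p.1 - x p.2)/(n:ℤ)|)
            ≤ ∑ p : ZMod n × ZMod n, ((if p = (g.symm e.1, g.symm e.2) then 1 else 0) +
              (if p = (g.symm e.2, g.symm e.1) then (1:ℤ) else 0)) :=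
              Finset.sum_le_sum (fun p _ => hpair p)
          _ = 2 := by
              rw [Finset.sum_add_distrib, Finset.sum_ite_eq' Finset.univ,
                Finset.sum_ite_eq' Finset.univ]
              simp
      calc (∑ p : ZMod n × ZMod n, |(x p.1 - x p.2)/(n:ℤ) - (x' p.1 - x' p.2)/(n:ℤ)|)
          ≤ ∑ p : ZMod n × ZMod n, (|(x1 p.1 - x1 p.2)/(n:ℤ) - (x p.1 - x p.2)/(n:ℤ)| +
            |(x1 p.1 - x1 p.2)/(n:ℤ) - (x' p.1 - x' p.2)/(n:ℤ)|) :=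
            Finset.sum_le_sum (fun p _ => htri p)
        _ = (∑ p : ZMod n × ZMod n, |(x1 p.1 - x1 p.2)/(n:ℤ) - (x p.1 - x p.2)/(n:ℤ)|) +
            (∑ p : ZMod n × ZMod n, |(x1 p.1 - x1 p.2)/(n:ℤ) - (x' p.1 - x' p.2)/(n:ℤ)|) :=
            Finset.sum_add_distrib
        _ ≤ 2 + 2 * s.length := by
            have := hΦ
            omega
        _ ≤ 2 * (e :: s).length := by
            simp [List.length_cons]
            omega
end

lemma F0' {m : ℤ} (y : ℤ) (h0 : 0 ≤ y) (h1 : y < m) : y / m = 0 :=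
  Int.ediv_eq_zero_of_lt h0 h1

lemma Fshift' {m : ℤ} (hm : m ≠ 0) (y : ℤ) : (y + m) / m = y / m + 1 := by
  have : y + m = y + 1 * m := by ring
  rw [this, Int.add_mul_ediv_right _ _ hm]

lemma Fneg' {m : ℤ} (hm : 0 < m) (y : ℤ) (h0 : -m ≤ y) (h1 : y < 0) : y / m = -1 := by
  have h := Fshift' (m := m) (by omega) y
  rw [F0' (y + m) (by omega) (by omega)] at h
  omega

lemma Fshiftdown' {m : ℤ} (hm : m ≠ 0) (y : ℤ) : (y - m) / m = y / m - 1 := by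
  have h := Fshift' (m := m) hm (y - m)
  simp at h
  omega

section
variable {L : ℕ}

lemma val_add_nat (hL : 2 ≤ L) (a : ZMod (L*L)) {j : ℕ} (hj : j < L) :
    (a + (j:ℕ)).val = (a.val + j) % (L*L) := by
  haveI : NeZero (L*L) := ⟨by positivity⟩
  rw [ZMod.val_add, ZMod.val_cast_of_lt (by nlinarith)]

lemma window_not_special (hL : 2 ≤ L) {a : ZMod (L*L)} (ha : L ∣ a.val)
    {j : ℕ} (hj1 : 1 ≤ j) (hjL : j < L) : ¬ L ∣ (a + (j:ℕ)).val := by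
  rw [val_add_nat hL a (by omega), Nat.dvd_mod_iff (Dvd.intro L rfl)]
  intro h
  obtain ⟨c, hc⟩ := ha
  have : L ∣ j := (Nat.dvd_add_right ⟨c, hc⟩).mp h
  have := Nat.le_of_dvd (by omega) this
  omega

lemma chi_window (hL : 2 ≤ L) {a b : ZMod (L*L)} (ha : L ∣ a.val)
    {j : ℕ} (hj1 : 1 ≤ j) (hjL : j < L) (hb : b = a + (j:ℕ)) :
    ((a.val:ℤ) - b.val + L)/((L*L:ℕ):ℤ) - ((a.val:ℤ) - (b.val:ℤ))/((L*L:ℕ):ℤ) = 1 ∧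
    ((b.val:ℤ) - a.val - L)/((L*L:ℕ):ℤ) - ((b.val:ℤ) - (a.val:ℤ))/((L*L:ℕ):ℤ) = -1 := by
  haveI : NeZero (L*L) := ⟨by positivity⟩
  have hA : a.val < L*L := ZMod.val_lt a
  have hBval : b.val = (a.val + j) % (L*L) := by rw [hb, val_add_nat hL a (by omega)]
  have hLn : L < L*L := by nlinarith
  set m : ℤ := ((L*L:ℕ):ℤ) with hm
  have hm0 : 0 < m := by rw [hm]; exact_mod_cast Nat.pos_of_ne_zero (by positivity)
  have hLm : (L:ℤ) < m := by rw [hm]; exact_mod_cast hLn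
  have hj1' : 1 ≤ (j:ℤ) := by exact_mod_cast hj1
  have hjL' : (j:ℤ) < L := by exact_mod_cast hjL
  by_cases hcase : a.val + j < L*L
  · have hB : (b.val:ℤ) = (a.val:ℤ) + j := by
      rw [hBval, Nat.mod_eq_of_lt hcase]; push_cast; ring
    rw [hB]
    constructor
    · have e1 : ((a.val:ℤ) - ((a.val:ℤ) + j) + L) = (L:ℤ) - j := by ring
      have e2 : ((a.val:ℤ) - ((a.val:ℤ) + j)) = -(j:ℤ) := by ring
      rw [e1, e2, F0' _ (by omega) (by omega), Fneg' hm0 _ (by omega) (by omega)]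
      ring
    · have e1 : (((a.val:ℤ) + j) - a.val - L) = (j:ℤ) - L := by ring
      have e2 : (((a.val:ℤ) + j) - a.val) = (j:ℤ) := by ring
      rw [e1, e2, Fneg' hm0 _ (by omega) (by omega), F0' _ (by omega) (by omega)]
      norm_num
  · have hBn : b.val = a.val + j - (L*L) := by
      rw [hBval, Nat.mod_eq_sub_mod (by omega), Nat.mod_eq_of_lt (by omega)]
    have hB : (b.val:ℤ) = (a.val:ℤ) + j - m := by
      rw [hBn, hm]
      have : L*L ≤ a.val + j := by omega
      push_cast [this]
      ring
    have hAub : (a.val:ℤ) < m := by rw [hm]; exact_mod_cast hA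
    have hAlb : m ≤ (a.val:ℤ) + j := by rw [hB] at *; omega
    rw [hB]
    constructor
    · have e1 : ((a.val:ℤ) - ((a.val:ℤ) + j - m) + L) = ((L:ℤ) - j) + m := by ring
      have e2 : ((a.val:ℤ) - ((a.val:ℤ) + j - m)) = m - (j:ℤ) := by ring
      rw [e1, e2, Fshift' (m := m) (by omega), F0' _ (by omega) (by omega),
        F0' _ (by omega) (by omega)]
      ring
    · have e1 : (((a.val:ℤ) + j - m) - a.val - L) = ((j:ℤ) - L) - m := by ring
      have e2 : (((a.val:ℤ) + j - m) - a.val) = (j:ℤ) - m := by ring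
      rw [e1, e2, Fshiftdown' (m := m) (by omega), Fneg' hm0 _ (by omega) (by omega),
        Fneg' hm0 _ (by omega) (by omega)]
      ring
lemma self_cast {n : ℕ} [NeZero n] (a : ZMod n) : ((a.val : ℕ) : ZMod n) = a := by
  rw [ZMod.natCast_val, ZMod.cast_id]

lemma chi_zero (hL : 2 ≤ L) {a b : ZMod (L*L)} (ha : L ∣ a.val) (hb : ¬ L ∣ b.val)
    (hnw : ∀ j : ℕ, 1 ≤ j → j < L → b ≠ a + (j:ℕ)) :
    ((a.val:ℤ) - b.val + L)/((L*L:ℕ):ℤ) = ((a.val:ℤ) - (b.val:ℤ))/((L*L:ℕ):ℤ) ∧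
    ((b.val:ℤ) - a.val - L)/((L*L:ℕ):ℤ) = ((b.val:ℤ) - (a.val:ℤ))/((L*L:ℕ):ℤ) := by
  haveI : NeZero (L*L) := ⟨by positivity⟩
  have hA : a.val < L*L := ZMod.val_lt a
  have hB : b.val < L*L := ZMod.val_lt b
  have hAB : a.val ≠ b.val := fun h => hb (h ▸ ha)
  have hLn : L < L*L := by nlinarith
  set m : ℤ := ((L*L:ℕ):ℤ) with hm
  have hm0 : 0 < m := by rw [hm]; exact_mod_cast Nat.pos_of_ne_zero (by positivity)
  have hLm : (L:ℤ) < m := by rw [hm]; exact_mod_cast hLn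
  have hA' : (a.val:ℤ) < m := by rw [hm]; exact_mod_cast hA
  have hB' : (b.val:ℤ) < m := by rw [hm]; exact_mod_cast hB
  have hL' : (2:ℤ) ≤ L := by exact_mod_cast hL
  rcases lt_or_gt_of_ne hAB with hlt | hgt
  · -- a.val < b.val, u := b.val - a.val
    set u : ℕ := b.val - a.val with hu
    have hu1 : 1 ≤ u := by omega
    have hun : u < L*L := by omega
    have hnotwin : ¬ u < L := by
      intro huL
      rcases Nat.lt_or_ge u L with _ | _
      · rcases Nat.eq_or_lt_of_le (Nat.one_le_iff_ne_zero.mpr (by omega) : 1 ≤ u) with h | h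
        all_goals {
          apply hnw u hu1 huL
          rw [← self_cast b, ← self_cast a]
          have : b.val = a.val + u := by omega
          rw [this]
          push_cast
          ring }
      · omega
    have hune : u ≠ L := by
      intro h
      apply hb
      have : b.val = a.val + L := by omega
      rw [this]
      exact Dvd.dvd.add ha ⟨1, by ring⟩
    have huL : L < u := by omega
    have hu' : (L:ℤ) < (u:ℤ) := by exact_mod_cast huL
    have hu'' : (u:ℤ) < m := by rw [hm]; exact_mod_cast hun
    have hBA : (b.val:ℤ) - a.val = (u:ℤ) := by
      have : b.val = a.val + u := by omega
      rw [this]; push_cast; ring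
    constructor
    · have e1 : ((a.val:ℤ) - b.val + L) = (L:ℤ) - u := by omega
      have e2 : ((a.val:ℤ) - b.val) = -(u:ℤ) := by omega
      rw [e1, e2, Fneg' hm0 _ (by omega) (by omega), Fneg' hm0 _ (by omega) (by omega)]
    · have e1 : ((b.val:ℤ) - a.val - L) = (u:ℤ) - L := by omega
      rw [e1, hBA, F0' _ (by omega) (by omega), F0' _ (by omega) (by omega)]
  · -- a.val > b.val, u := a.val - b.val, v := L*L - u
    set u : ℕ := a.val - b.val with hu
    have hu1 : 1 ≤ u := by omega
    have hun : u < L*L := by omega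
    set v : ℕ := L*L - u with hv
    have hv1 : 1 ≤ v := by omega
    have hvn : v < L*L := by omega
    have hnotwin : ¬ v < L := by
      intro hvL
      apply hnw v hv1 hvL
      have h3 : a.val + v = b.val + L*L := by omega
      calc b = ((b.val : ℕ) : ZMod (L*L)) := (self_cast b).symm
        _ = ((b.val + L*L : ℕ) : ZMod (L*L)) := by rw [Nat.cast_add, ZMod.natCast_self, add_zero]
        _ = ((a.val + v : ℕ) : ZMod (L*L)) := by rw [← h3]
        _ = a + ((v : ℕ) : ZMod (L*L)) := by rw [Nat.cast_add, self_cast a]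
    have hvne : v ≠ L := by
      intro h
      apply hb
      have : b.val + L*L = a.val + L := by omega
      have h3 : L ∣ b.val + L*L := by
        rw [this]
        exact Dvd.dvd.add ha ⟨1, by ring⟩
      have h4 : L ∣ L*L := ⟨L, rfl⟩
      exact (Nat.dvd_add_iff_left h4).mpr h3
    have hvL : L < v := by omega
    have huNL : u < L*L - L := by omega
    have hu' : (u:ℤ) ≥ 1 := by exact_mod_cast hu1
    have hu'' : (u:ℤ) < m - L := by
      have : (u:ℤ) < ((L*L - L : ℕ):ℤ) := by exact_mod_cast huNL
      rw [hm]
      push_cast [Nat.sub_le_iff_le_add] at this ⊢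
      omega
    have hABu : (a.val:ℤ) - b.val = (u:ℤ) := by
      have : a.val = b.val + u := by omega
      rw [this]; push_cast; ring
    constructor
    · have e1 : ((a.val:ℤ) - b.val + L) = (u:ℤ) + L := by omega
      rw [e1, hABu, F0' _ (by omega) (by omega), F0' _ (by omega) (by omega)]
    · have e1 : ((b.val:ℤ) - a.val - L) = -(u:ℤ) - L := by omega
      have e2 : ((b.val:ℤ) - a.val) = -(u:ℤ) := by omega
      rw [e1, e2, Fneg' hm0 _ (by omega) (by omega), Fneg' hm0 _ (by omega) (by omega)]
end

def wOne (L : ℕ) (a b : ZMod (L*L)) : Prop :=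
  L ∣ a.val ∧ ∃ j : ℕ, 1 ≤ j ∧ j < L ∧ b = a + (j:ℕ)

noncomputable def WPs (L : ℕ) [NeZero (L*L)] : Finset (ZMod (L*L) × ZMod (L*L)) :=
  letI := Classical.decPred (fun p : ZMod (L*L) × ZMod (L*L) => wOne L p.1 p.2 ∨ wOne L p.2 p.1)
  univ.filter (fun p => wOne L p.1 p.2 ∨ wOne L p.2 p.1)

noncomputable def NB (L : ℕ) [NeZero (L*L)] (a : ZMod (L*L)) : Finset (ZMod (L*L)) :=
  ((Finset.Ico 1 L).image fun j : ℕ => a + (j:ℕ)) ∪ ((Finset.Ico 1 L).image fun j : ℕ => a - (j:ℕ))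

section
variable {L : ℕ} [NeZero (L*L)]

lemma mem_WPs {p : ZMod (L*L) × ZMod (L*L)} :
    p ∈ WPs L ↔ (wOne L p.1 p.2 ∨ wOne L p.2 p.1) := by
  classical
  simp [WPs]

lemma card_NB_le (a : ZMod (L*L)) : (NB L a).card ≤ 2*(L-1) := by
  classical
  calc (NB L a).card ≤ ((Finset.Ico 1 L).image fun j : ℕ => a + (j:ℕ)).card
        + ((Finset.Ico 1 L).image fun j : ℕ => a - (j:ℕ)).card := card_union_le _ _
    _ ≤ (Finset.Ico 1 L).card + (Finset.Ico 1 L).card :=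
        Nat.add_le_add (card_image_le) (card_image_le)
    _ = 2*(L-1) := by rw [Nat.card_Ico]; omega

lemma mem_NB_of_w {a b : ZMod (L*L)} (h : wOne L a b ∨ wOne L b a) : b ∈ NB L a := by
  classical
  rcases h with ⟨_, j, hj1, hjL, hb⟩ | ⟨_, j, hj1, hjL, ha⟩
  · exact mem_union_left _ (mem_image.mpr ⟨j, mem_Ico.mpr ⟨hj1, hjL⟩, hb.symm⟩)
  · refine mem_union_right _ (mem_image.mpr ⟨j, mem_Ico.mpr ⟨hj1, hjL⟩, ?_⟩)
    rw [ha]; ring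

lemma NB_symm {a b : ZMod (L*L)} (h : b ∈ NB L a) : a ∈ NB L b := by
  classical
  rcases mem_union.mp h with h' | h'
  · obtain ⟨j, hj, hb⟩ := mem_image.mp h'
    refine mem_union_right _ (mem_image.mpr ⟨j, hj, ?_⟩)
    rw [← hb]; ring
  · obtain ⟨j, hj, hb⟩ := mem_image.mp h'
    refine mem_union_left _ (mem_image.mpr ⟨j, hj, ?_⟩)
    rw [← hb]; ring
lemma cast_lt_val {j : ℕ} (hj : j < L*L) : ((j : ℕ) : ZMod (L*L)).val = j :=
  ZMod.val_cast_of_lt hj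

lemma WP_card_lower (hL : 2 ≤ L) : 2*(L*L - L) ≤ (WPs L).card := by
  classical
  set D : Finset (ℕ × ℕ) := (range L) ×ˢ (Finset.Ico 1 L) with hD
  have hjlt : ∀ j ∈ Finset.Ico 1 L, j < L*L := fun j hj => by
    have := (mem_Ico.mp hj).2; nlinarith
  have hval : ∀ i ∈ range L, ((i*L : ℕ) : ZMod (L*L)).val = i*L := fun i hi => by
    have := mem_range.mp hi
    exact ZMod.val_cast_of_lt (by exact mul_lt_mul_of_pos_right this (by omega))
  set f1 : ℕ × ℕ → ZMod (L*L) × ZMod (L*L) :=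
    fun q => (((q.1*L : ℕ) : ZMod (L*L)), ((q.1*L : ℕ) : ZMod (L*L)) + (q.2 : ℕ)) with hf1
  set f2 : ℕ × ℕ → ZMod (L*L) × ZMod (L*L) :=
    fun q => (((q.1*L : ℕ) : ZMod (L*L)) + (q.2 : ℕ), ((q.1*L : ℕ) : ZMod (L*L))) with hf2
  have hfst : ∀ q ∈ D, ∀ r ∈ D, (((q.1*L : ℕ)) : ZMod (L*L)) = ((r.1*L : ℕ) : ZMod (L*L)) →
      q.1 = r.1 := by
    intro q hq r hr h
    have h1 := hval q.1 (mem_product.mp hq).1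
    have h2 := hval r.1 (mem_product.mp hr).1
    have := congrArg ZMod.val h
    rw [h1, h2] at this
    exact Nat.eq_of_mul_eq_mul_right (by omega) this
  have hsnd : ∀ q ∈ D, ∀ r ∈ D, ((q.2 : ℕ) : ZMod (L*L)) = ((r.2 : ℕ) : ZMod (L*L)) →
      q.2 = r.2 := by
    intro q hq r hr h
    have h1 := cast_lt_val (hjlt q.2 (mem_product.mp hq).2)
    have h2 := cast_lt_val (hjlt r.2 (mem_product.mp hr).2)
    have := congrArg ZMod.val h
    rw [h1, h2] at this
    exact this
  have hinj1 : Set.InjOn f1 D := by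
    intro q hq r hr h
    rw [hf1] at h
    have e1 : q.1 = r.1 := hfst q hq r hr (congrArg Prod.fst h)
    have e2 : ((q.2 : ℕ) : ZMod (L*L)) = ((r.2 : ℕ) : ZMod (L*L)) := by
      have := congrArg Prod.snd h
      simp only at this
      rw [e1] at this
      exact add_left_cancel this
    exact Prod.ext e1 (hsnd q hq r hr e2)
  have hinj2 : Set.InjOn f2 D := by
    intro q hq r hr h
    rw [hf2] at h
    have e1 : q.1 = r.1 := hfst q hq r hr (congrArg Prod.snd h)
    have e2 : ((q.2 : ℕ) : ZMod (L*L)) = ((r.2 : ℕ) : ZMod (L*L)) := by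
      have := congrArg Prod.fst h
      simp only at this
      rw [e1] at this
      exact add_left_cancel this
    exact Prod.ext e1 (hsnd q hq r hr e2)
  have hw1 : ∀ q ∈ D, wOne L (f1 q).1 (f1 q).2 := by
    intro q hq
    obtain ⟨hq1, hq2⟩ := mem_product.mp hq
    refine ⟨by rw [hval q.1 hq1]; exact ⟨q.1, mul_comm _ _⟩, q.2,
      (mem_Ico.mp hq2).1, (mem_Ico.mp hq2).2, rfl⟩
  have hmem1 : (D.image f1) ⊆ WPs L := by
    intro p hp
    obtain ⟨q, hq, hpq⟩ := mem_image.mp hp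
    exact mem_WPs.mpr (Or.inl (hpq ▸ hw1 q hq))
  have hmem2 : (D.image f2) ⊆ WPs L := by
    intro p hp
    obtain ⟨q, hq, hpq⟩ := mem_image.mp hp
    refine mem_WPs.mpr (Or.inr ?_)
    rw [← hpq]
    exact hw1 q hq
  have hdisj : Disjoint (D.image f1) (D.image f2) := by
    rw [Finset.disjoint_left]
    intro p hp1 hp2
    obtain ⟨q, hq, hpq⟩ := mem_image.mp hp1
    obtain ⟨r, hr, hpr⟩ := mem_image.mp hp2
    have hqD := mem_product.mp hq
    have hrD := mem_product.mp hr
    have hdvd : L ∣ p.1.val := by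
      rw [← hpq]
      rw [hval q.1 hqD.1]
      exact ⟨q.1, mul_comm _ _⟩
    have hndvd : ¬ L ∣ p.1.val := by
      rw [← hpr]
      exact window_not_special hL (by rw [hval r.1 hrD.1]; exact ⟨r.1, mul_comm _ _⟩)
        (mem_Ico.mp hrD.2).1 (mem_Ico.mp hrD.2).2
    exact hndvd hdvd
  have hcard : ((D.image f1) ∪ (D.image f2)).card = 2*(L*L - L) := by
    rw [card_union_of_disjoint hdisj, card_image_of_injOn hinj1, card_image_of_injOn hinj2,
      hD, card_product, card_range, Nat.card_Ico]
    have : L * (L - 1) = L*L - L := by rw [Nat.mul_sub_one]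
    omega
  calc 2*(L*L - L) = ((D.image f1) ∪ (D.image f2)).card := hcard.symm
    _ ≤ (WPs L).card := card_le_card (union_subset hmem1 hmem2)

lemma WPs_subset_biUnion :
    WPs L ⊆ Finset.univ.biUnion (fun a : ZMod (L*L) => (NB L a).image (fun b => (a, b))) := by
  classical
  intro p hp
  refine mem_biUnion.mpr ⟨p.1, mem_univ _, mem_image.mpr ⟨p.2, mem_NB_of_w (mem_WPs.mp hp), rfl⟩⟩

lemma WP_card_upper : (WPs L).card ≤ (L*L) * (2*(L-1)) := by
  classical
  calc (WPs L).card
      ≤ (Finset.univ.biUnion (fun a : ZMod (L*L) => (NB L a).image (fun b => (a, b)))).card :=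
        card_le_card WPs_subset_biUnion
    _ ≤ ∑ a : ZMod (L*L), ((NB L a).image (fun b => (a, b))).card := card_biUnion_le
    _ ≤ ∑ _a : ZMod (L*L), 2*(L-1) :=
        sum_le_sum (fun a _ => le_trans card_image_le (card_NB_le a))
    _ = (Fintype.card (ZMod (L*L))) * (2*(L-1)) := by rw [sum_const, smul_eq_mul, card_univ]
    _ = (L*L) * (2*(L-1)) := by rw [ZMod.card]

lemma sum_pair_biUnion (w : ZMod (L*L) → ℤ) (f : ZMod (L*L) × ZMod (L*L) → ℤ) :
    ∑ p ∈ Finset.univ.biUnion (fun a : ZMod (L*L) => (NB L a).image (fun b => (a, b))), f p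
      = ∑ a : ZMod (L*L), ∑ b ∈ NB L a, f (a, b) := by
  classical
  rw [Finset.sum_biUnion]
  · exact Finset.sum_congr rfl (fun a _ => Finset.sum_image (fun x _ y _ h => (Prod.mk.injEq _ _ _ _).mp h |>.2))
  · intro a _ a' _ haa'
    rw [Function.onFun]
    rw [Finset.disjoint_left]
    intro p hp hp'
    obtain ⟨b, _, hb⟩ := Finset.mem_image.mp hp
    obtain ⟨b', _, hb'⟩ := Finset.mem_image.mp hp'
    apply haa'
    rw [← hb] at hb'
    exact ((Prod.mk.injEq _ _ _ _).mp hb').1.symm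

lemma sum_fst_WP (w : ZMod (L*L) → ℤ) (hw : ∀ t, 0 ≤ w t) :
    ∑ p ∈ WPs L, w p.1 ≤ (2*(L-1) : ℕ) * ∑ t, w t := by
  classical
  calc ∑ p ∈ WPs L, w p.1
      ≤ ∑ p ∈ Finset.univ.biUnion (fun a : ZMod (L*L) => (NB L a).image (fun b => (a, b))), w p.1 :=
        Finset.sum_le_sum_of_subset_of_nonneg WPs_subset_biUnion (fun p _ _ => hw p.1)
    _ = ∑ a : ZMod (L*L), ∑ _b ∈ NB L a, w a := sum_pair_biUnion w _
    _ = ∑ a : ZMod (L*L), ((NB L a).card : ℤ) * w a := by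
        refine Finset.sum_congr rfl (fun a _ => ?_)
        rw [Finset.sum_const, nsmul_eq_mul]
    _ ≤ ∑ a : ZMod (L*L), ((2*(L-1) : ℕ) : ℤ) * w a := by
        refine Finset.sum_le_sum (fun a _ => ?_)
        exact mul_le_mul_of_nonneg_right (by exact_mod_cast card_NB_le a) (hw a)
    _ = (2*(L-1) : ℕ) * ∑ t, w t := by rw [← Finset.mul_sum]

lemma sum_snd_WP (w : ZMod (L*L) → ℤ) (hw : ∀ t, 0 ≤ w t) :
    ∑ p ∈ WPs L, w p.2 ≤ (2*(L-1) : ℕ) * ∑ t, w t := by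
  classical
  have hswap : ∑ a : ZMod (L*L), ∑ b ∈ NB L a, w b
      = ∑ b : ZMod (L*L), ∑ a ∈ NB L b, w b := by
    refine Finset.sum_comm' (t' := (Finset.univ : Finset (ZMod (L*L))))
      (s' := fun b => NB L b) ?_ 
    intro a b
    constructor
    · rintro ⟨_, hb⟩
      exact ⟨NB_symm hb, Finset.mem_univ _⟩
    · rintro ⟨hb, _⟩
      exact ⟨Finset.mem_univ _, NB_symm hb⟩
  calc ∑ p ∈ WPs L, w p.2
      ≤ ∑ p ∈ Finset.univ.biUnion (fun a : ZMod (L*L) => (NB L a).image (fun b => (a, b))), w p.2 :=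
        Finset.sum_le_sum_of_subset_of_nonneg WPs_subset_biUnion (fun p _ _ => hw p.2)
    _ = ∑ a : ZMod (L*L), ∑ b ∈ NB L a, w b := sum_pair_biUnion w _
    _ = ∑ b : ZMod (L*L), ∑ _a ∈ NB L b, w b := hswap
    _ = ∑ b : ZMod (L*L), ((NB L b).card : ℤ) * w b := by
        refine Finset.sum_congr rfl (fun a _ => ?_)
        rw [Finset.sum_const, nsmul_eq_mul]
    _ ≤ ∑ b : ZMod (L*L), ((2*(L-1) : ℕ) : ℤ) * w b := by
        refine Finset.sum_le_sum (fun a _ => ?_)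
        exact mul_le_mul_of_nonneg_right (by exact_mod_cast card_NB_le a) (hw a)
    _ = (2*(L-1) : ℕ) * ∑ t, w t := by rw [← Finset.mul_sum]

lemma lemmaB_core (hL : 6 ≤ L) (z : ZMod (L*L) → ℤ) (χ : ZMod (L*L) → ZMod (L*L) → ℤ)
    (hzsum : ∑ t, z t = -1)
    (hχW : ∀ p ∈ WPs L, |χ p.1 p.2| = 1)
    (hχ0 : ∀ p : ZMod (L*L) × ZMod (L*L), p ∉ WPs L → χ p.1 p.2 = 0) :
    (4*((L*L:ℕ):ℤ) - 10*(L:ℤ) + 6) ≤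
      ∑ p : ZMod (L*L) × ZMod (L*L), |z p.1 - z p.2 + χ p.1 p.2| := by
  classical
  set m : ℤ := ((L*L:ℕ):ℤ) with hm
  have hmLL : m = (L:ℤ)*(L:ℤ) := by rw [hm]; push_cast; ring
  have hL' : (6:ℤ) ≤ (L:ℤ) := by exact_mod_cast hL
  have hm0 : (0:ℤ) < m := by nlinarith
  have hm36 : (36:ℤ) ≤ m := by nlinarith
  have hKcast : ((2*(L-1) : ℕ) : ℤ) = 2*(L:ℤ) - 2 := by
    have h1 : 1 ≤ L := by omega
    push_cast [h1]
    ring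
  have hWlow : 2*(m - (L:ℤ)) ≤ ((WPs L).card : ℤ) := by
    have h0 := WP_card_lower (by omega : 2 ≤ L)
    have hc0 : ((L*L - L : ℕ) : ℤ) = m - (L:ℤ) := by
      rw [Nat.cast_sub (by nlinarith)]
    have hcast : ((2*(L*L - L) : ℕ) : ℤ) = 2*(m - (L:ℤ)) := by
      rw [Nat.cast_mul, hc0]
      norm_num
    calc 2*(m - (L:ℤ)) = ((2*(L*L - L) : ℕ) : ℤ) := hcast.symm
      _ ≤ ((WPs L).card : ℤ) := by exact_mod_cast h0
  have hWup : ((WPs L).card : ℤ) ≤ m * (2*(L:ℤ) - 2) := by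
    calc ((WPs L).card : ℤ) ≤ (((L*L) * (2*(L-1)) : ℕ) : ℤ) := by exact_mod_cast WP_card_upper
      _ = m * (2*(L:ℤ) - 2) := by rw [Nat.cast_mul, hKcast]
  have hcard : (Fintype.card (ZMod (L*L)) : ℤ) = m := by rw [ZMod.card]
  by_cases hA : ∃ c : ℤ, ∑ t, |z t - c| ≤ m - 4*(L:ℤ) + 3
  · obtain ⟨c, hc⟩ := hA
    set w : ZMod (L*L) → ℤ := fun t => z t - c with hw
    set tc : ℤ := ∑ t, |w t| with htc
    have htcnn : 0 ≤ tc := Finset.sum_nonneg (fun t _ => abs_nonneg _)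
    have htc1 : 1 ≤ tc := by
      by_contra hcon
      have htc0 : (∑ t, |w t|) = 0 := by omega
      have hall : ∀ t ∈ Finset.univ, |w t| = 0 :=
        (Finset.sum_eq_zero_iff_of_nonneg (fun t _ => abs_nonneg (w t))).mp htc0
      have hzc : ∀ t : ZMod (L*L), z t = c := by
        intro t
        have h2 := abs_eq_zero.mp (hall t (Finset.mem_univ t))
        have h3 : z t - c = 0 := h2
        linarith
      have hmc : (-1 : ℤ) = m * c := by
        rw [← hzsum, Finset.sum_congr rfl (fun t _ => hzc t), Finset.sum_const, ← hcard,
          nsmul_eq_mul, Finset.card_univ]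
      have hdvd : m ∣ 1 := ⟨-c, by linarith⟩
      have := Int.le_of_dvd (by norm_num) hdvd
      omega
    set Zc : ℕ := (Finset.univ.filter (fun t : ZMod (L*L) => w t = 0)).card with hZc
    have hZlow : m - tc ≤ (Zc:ℤ) := by
      set r : ℕ := (Finset.univ.filter (fun t : ZMod (L*L) => ¬ w t = 0)).card with hr
      have hZr : Zc + r = Fintype.card (ZMod (L*L)) := by
        rw [hZc, hr, Finset.card_filter_add_card_filter_not, Finset.card_univ]
      have hrt : (r:ℤ) ≤ tc := by
        have h1 : (r:ℤ) = ∑ _t ∈ Finset.univ.filter (fun t : ZMod (L*L) => ¬ w t = 0), (1:ℤ) := by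
          rw [Finset.sum_const, nsmul_eq_mul, mul_one]
        rw [h1, htc]
        calc ∑ _t ∈ Finset.univ.filter (fun t : ZMod (L*L) => ¬ w t = 0), (1:ℤ)
            ≤ ∑ t ∈ Finset.univ.filter (fun t : ZMod (L*L) => ¬ w t = 0), |w t| := by
              refine Finset.sum_le_sum (fun t ht => ?_)
              have h2 := (Finset.mem_filter.mp ht).2
              exact Int.one_le_abs (by simpa using h2)
          _ ≤ ∑ t, |w t| :=
              Finset.sum_le_sum_of_subset_of_nonneg (Finset.filter_subset _ _)
                (fun t _ _ => abs_nonneg _)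
      have h5 : ((Zc:ℤ) + r) = m := by
        rw [← hcard]
        exact_mod_cast congrArg (Nat.cast : ℕ → ℤ) hZr
      omega
    have hsum1 : (∑ p : ZMod (L*L) × ZMod (L*L), if w p.2 = 0 then |w p.1| else 0)
        = tc * Zc := by
      rw [Fintype.sum_prod_type]
      have hinner : ∀ a : ZMod (L*L), (∑ b : ZMod (L*L), if w b = 0 then |w a| else 0)
          = |w a| * (Zc:ℤ) := by
        intro a
        rw [← Finset.sum_filter, Finset.sum_const, hZc, nsmul_eq_mul, mul_comm]
      rw [Finset.sum_congr rfl (fun a _ => hinner a), ← Finset.sum_mul, ← htc]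
    have hsum2 : (∑ p : ZMod (L*L) × ZMod (L*L), if w p.1 = 0 then |w p.2| else 0)
        = (Zc:ℤ) * tc := by
      rw [Fintype.sum_prod_type]
      have hinner : ∀ a : ZMod (L*L), (∑ b : ZMod (L*L), if w a = 0 then |w b| else 0)
          = if w a = 0 then tc else 0 := by
        intro a
        by_cases h : w a = 0
        · simp only [h, if_true, ← htc]
        · simp only [h, if_false, Finset.sum_const_zero]
      rw [Finset.sum_congr rfl (fun a _ => hinner a), ← Finset.sum_filter, Finset.sum_const,
        hZc, nsmul_eq_mul]
    have hper : ∀ p : ZMod (L*L) × ZMod (L*L),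
        (if w p.2 = 0 then |w p.1| else 0) + (if w p.1 = 0 then |w p.2| else 0)
          ≤ |w p.1 - w p.2| := by
      intro p
      by_cases h1 : w p.1 = 0 <;> by_cases h2 : w p.2 = 0 <;>
        simp [h1, h2, abs_nonneg, abs_sub_comm]
    have hP : 2*tc*(m - tc) ≤ ∑ p : ZMod (L*L) × ZMod (L*L), |w p.1 - w p.2| := by
      have hPlow : tc * Zc + (Zc:ℤ) * tc ≤ ∑ p : ZMod (L*L) × ZMod (L*L), |w p.1 - w p.2| := by
        rw [← hsum1, ← hsum2, ← Finset.sum_add_distrib]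
        exact Finset.sum_le_sum (fun p _ => hper p)
      nlinarith [hZlow, htcnn]
    have hmaster : ∀ p : ZMod (L*L) × ZMod (L*L),
        |w p.1 - w p.2| + (if p ∈ WPs L then 1 - 2*(|w p.1| + |w p.2|) else 0)
          ≤ |z p.1 - z p.2 + χ p.1 p.2| := by
      intro p
      have hzw : z p.1 - z p.2 = w p.1 - w p.2 := by simp only [hw]; ring
      rw [hzw]
      by_cases hp : p ∈ WPs L
      · rw [if_pos hp]
        have h1 := hχW p hp
        have k1 : |χ p.1 p.2| ≤ |w p.1 - w p.2 + χ p.1 p.2| + |w p.1 - w p.2| := by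
          calc |χ p.1 p.2| = |(w p.1 - w p.2 + χ p.1 p.2) - (w p.1 - w p.2)| := by
                congr 1
                ring
            _ ≤ _ := abs_sub _ _
        have k2 : |w p.1 - w p.2| ≤ |w p.1| + |w p.2| := abs_sub _ _
        linarith [h1 ▸ k1]
      · rw [if_neg hp, hχ0 p hp, add_zero, add_zero]
    have hWsum : ((WPs L).card : ℤ) - 2*((∑ p ∈ WPs L, |w p.1|) + (∑ p ∈ WPs L, |w p.2|))
        ≤ ∑ p : ZMod (L*L) × ZMod (L*L),
            (if p ∈ WPs L then 1 - 2*(|w p.1| + |w p.2|) else 0) := by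
      rw [Finset.sum_ite_mem, Finset.univ_inter, Finset.sum_sub_distrib, Finset.sum_const,
        nsmul_eq_mul, mul_one, ← Finset.mul_sum, Finset.sum_add_distrib]
    have hS1 : (∑ p ∈ WPs L, |w p.1|) ≤ (2*(L:ℤ) - 2) * tc := by
      have := sum_fst_WP (fun t => |w t|) (fun t => abs_nonneg _)
      rw [hKcast] at this
      rw [htc]
      exact this
    have hS2 : (∑ p ∈ WPs L, |w p.2|) ≤ (2*(L:ℤ) - 2) * tc := by
      have := sum_snd_WP (fun t => |w t|) (fun t => abs_nonneg _)
      rw [hKcast] at this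
      rw [htc]
      exact this
    have hT : (∑ p : ZMod (L*L) × ZMod (L*L), |w p.1 - w p.2|) +
        (∑ p : ZMod (L*L) × ZMod (L*L), (if p ∈ WPs L then 1 - 2*(|w p.1| + |w p.2|) else 0))
          ≤ ∑ p : ZMod (L*L) × ZMod (L*L), |z p.1 - z p.2 + χ p.1 p.2| := by
      rw [← Finset.sum_add_distrib]
      exact Finset.sum_le_sum (fun p _ => hmaster p)
    have hq : 0 ≤ (tc - 1) * ((m - 4*(L:ℤ) + 3) - tc) := mul_nonneg (by linarith) (by linarith)
    nlinarith [hT, hP, hWsum, hS1, hS2, hWlow]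
  · push_neg at hA
    have hper : ∀ p : ZMod (L*L) × ZMod (L*L),
        |z p.1 - z p.2| - (if p ∈ WPs L then (1:ℤ) else 0) ≤ |z p.1 - z p.2 + χ p.1 p.2| := by
      intro p
      by_cases hp : p ∈ WPs L
      · rw [if_pos hp]
        have h1 := hχW p hp
        have k1 : |z p.1 - z p.2| ≤ |z p.1 - z p.2 + χ p.1 p.2| + |χ p.1 p.2| := by
          calc |z p.1 - z p.2| = |(z p.1 - z p.2 + χ p.1 p.2) - χ p.1 p.2| := by
                congr 1
                ring
            _ ≤ _ := abs_sub _ _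
        linarith [h1 ▸ k1]
      · rw [if_neg hp, hχ0 p hp, add_zero, sub_zero]
    have hPlow : m * (m - 4*(L:ℤ) + 4) ≤ ∑ p : ZMod (L*L) × ZMod (L*L), |z p.1 - z p.2| := by
      rw [Fintype.sum_prod_type]
      have hinner : ∀ a : ZMod (L*L), m - 4*(L:ℤ) + 4 ≤ ∑ b : ZMod (L*L), |z a - z b| := by
        intro a
        have h1 := hA (z a)
        have heq : (∑ t, |z t - z a|) = ∑ b : ZMod (L*L), |z a - z b| :=
          Finset.sum_congr rfl (fun b _ => abs_sub_comm _ _)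
        linarith [heq ▸ h1]
      calc m * (m - 4*(L:ℤ) + 4)
          = (Fintype.card (ZMod (L*L)) : ℤ) * (m - 4*(L:ℤ) + 4) := by rw [hcard]
        _ ≤ ∑ a : ZMod (L*L), ∑ b : ZMod (L*L), |z a - z b| := by
            have := Finset.card_nsmul_le_sum Finset.univ
              (fun a : ZMod (L*L) => ∑ b : ZMod (L*L), |z a - z b|)
              (m - 4*(L:ℤ) + 4) (fun a _ => hinner a)
            rw [Finset.card_univ, nsmul_eq_mul] at this
            exact this
    have hWcount : (∑ p : ZMod (L*L) × ZMod (L*L), (if p ∈ WPs L then (1:ℤ) else 0))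
        = ((WPs L).card : ℤ) := by
      rw [Finset.sum_ite_mem, Finset.univ_inter, Finset.sum_const, nsmul_eq_mul, mul_one]
    have hT : (∑ p : ZMod (L*L) × ZMod (L*L), |z p.1 - z p.2|) -
        (∑ p : ZMod (L*L) × ZMod (L*L), (if p ∈ WPs L then (1:ℤ) else 0))
          ≤ ∑ p : ZMod (L*L) × ZMod (L*L), |z p.1 - z p.2 + χ p.1 p.2| := by
      rw [← Finset.sum_sub_distrib]
      exact Finset.sum_le_sum (fun p _ => hper p)
    have h1 : (4:ℤ) ≤ m - 6*(L:ℤ) + 6 := by nlinarith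
    have h2 : 4*m ≤ m*(m - 6*(L:ℤ) + 6) := by nlinarith
    nlinarith [hT, hPlow, hWcount ▸ hWup]






lemma card_SP (hL : 2 ≤ L) :
    (Finset.univ.filter (fun t : ZMod (L*L) => L ∣ t.val)).card = L := by
  classical
  have hval : ∀ i, i < L → ((i*L : ℕ) : ZMod (L*L)).val = i*L := fun i hi =>
    ZMod.val_cast_of_lt (mul_lt_mul_of_pos_right hi (by omega))
  have himg : Finset.univ.filter (fun t : ZMod (L*L) => L ∣ t.val)
      = (range L).image (fun i => ((i*L:ℕ) : ZMod (L*L))) := by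
    ext t
    simp only [mem_filter, mem_univ, true_and, mem_image, mem_range]
    constructor
    · rintro ⟨c, hc⟩
      have hvlt := ZMod.val_lt t
      have hcL : c < L := by nlinarith
      exact ⟨c, hcL, by rw [← self_cast t, hc, mul_comm L c]⟩
    · rintro ⟨i, hi, rfl⟩
      rw [hval i hi]
      exact ⟨i, mul_comm _ _⟩
  rw [himg, Finset.card_image_of_injOn, card_range]
  intro i hi j hj h
  simp only [coe_range, Set.mem_Iio] at hi hj
  have := congrArg ZMod.val h
  rw [hval i hi, hval j hj] at this
  exact Nat.eq_of_mul_eq_mul_right (by omega) this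

lemma lemmaB (hL : 6 ≤ L) (d : ZMod (L*L) → ℤ)
    (hsum : ∑ t, d t = 0)
    (hmod : ∀ t : ZMod (L*L), d t % ((L*L:ℕ):ℤ) = if L ∣ t.val then (L:ℤ) else 0) :
    (4*((L*L:ℕ):ℤ) - 10*(L:ℤ) + 6) ≤ ∑ p : ZMod (L*L) × ZMod (L*L),
      |((p.1.val:ℤ) - (p.2.val:ℤ))/((L*L:ℕ):ℤ) -
        (((p.1.val:ℤ) + d p.1) - ((p.2.val:ℤ) + d p.2))/((L*L:ℕ):ℤ)| := by
  classical
  have hL2 : 2 ≤ L := by omega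
  set m : ℤ := ((L*L:ℕ):ℤ) with hm
  have hm0 : (0:ℤ) < m := by
    rw [hm]
    exact_mod_cast Nat.pos_of_ne_zero (by positivity)
  set ρ : ZMod (L*L) → ℤ := fun t => if L ∣ t.val then (L:ℤ) else 0 with hρ
  set z : ZMod (L*L) → ℤ := fun t => d t / m with hz
  have hd : ∀ t, d t = m * z t + ρ t := by
    intro t
    have h1 := Int.mul_ediv_add_emod (d t) m
    rw [hmod t] at h1
    simp only [hz, hρ]
    linarith
  set χ : ZMod (L*L) → ZMod (L*L) → ℤ :=
    fun a b => ((a.val:ℤ) - (b.val:ℤ) + (ρ a - ρ b))/m - ((a.val:ℤ) - (b.val:ℤ))/m with hχ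
  have hterm : ∀ p : ZMod (L*L) × ZMod (L*L),
      |((p.1.val:ℤ) - (p.2.val:ℤ))/m - (((p.1.val:ℤ) + d p.1) - ((p.2.val:ℤ) + d p.2))/m|
        = |z p.1 - z p.2 + χ p.1 p.2| := by
    intro p
    have e : ((p.1.val:ℤ) + d p.1) - ((p.2.val:ℤ) + d p.2)
        = (((p.1.val:ℤ) - (p.2.val:ℤ)) + (ρ p.1 - ρ p.2)) + (z p.1 - z p.2) * m := by
      rw [hd p.1, hd p.2]
      ring
    rw [e, Int.add_mul_ediv_right _ _ (ne_of_gt hm0)]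
    have e2 : ((p.1.val:ℤ) - (p.2.val:ℤ))/m -
        ((((p.1.val:ℤ) - (p.2.val:ℤ)) + (ρ p.1 - ρ p.2))/m + (z p.1 - z p.2))
          = -(z p.1 - z p.2 + χ p.1 p.2) := by
      simp only [hχ]
      ring
    rw [e2, abs_neg]
  have hρsum : (∑ t, ρ t) = m := by
    simp only [hρ]
    rw [← Finset.sum_filter, Finset.sum_const, card_SP hL2, nsmul_eq_mul, hm]
    push_cast
    ring
  have hzsum : (∑ t, z t) = -1 := by
    have h1 : (0:ℤ) = m * (∑ t, z t) + m := by
      rw [← hsum, Finset.sum_congr rfl (fun t _ => hd t), Finset.sum_add_distrib, hρsum,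
        ← Finset.mul_sum]
    have h2 : m * ((∑ t, z t) + 1) = 0 := by linarith
    rcases mul_eq_zero.mp h2 with h | h
    · omega
    · linarith
  have hχW : ∀ p ∈ WPs L, |χ p.1 p.2| = 1 := by
    intro p hp
    have hp' : wOne L p.1 p.2 ∨ wOne L p.2 p.1 := mem_WPs.mp hp
    rcases hp' with ⟨hdvd, j, hj1, hjL, hb⟩ | ⟨hdvd, j, hj1, hjL, hb⟩
    · have hnd : ¬ L ∣ p.2.val := by rw [hb]; exact window_not_special hL2 hdvd hj1 hjL
      have hval : χ p.1 p.2 = 1 := by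
        have hcw := (chi_window hL2 hdvd hj1 hjL hb).1
        simp only [hχ, hρ, if_pos hdvd, if_neg hnd]
        rw [show ((p.1.val:ℤ) - (p.2.val:ℤ) + ((L:ℤ) - 0)) = ((p.1.val:ℤ) - p.2.val + L) by ring]
        exact hcw
      rw [hval]
      norm_num
    · have hnd : ¬ L ∣ p.1.val := by rw [hb]; exact window_not_special hL2 hdvd hj1 hjL
      have hval : χ p.1 p.2 = -1 := by
        have hcw := (chi_window hL2 hdvd hj1 hjL hb).2
        simp only [hχ, hρ, if_pos hdvd, if_neg hnd]
        rw [show ((p.1.val:ℤ) - (p.2.val:ℤ) + (0 - (L:ℤ))) = ((p.1.val:ℤ) - p.2.val - L) by ring]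
        exact hcw
      rw [hval]
      norm_num
  have hχ0 : ∀ p : ZMod (L*L) × ZMod (L*L), p ∉ WPs L → χ p.1 p.2 = 0 := by
    intro p hp
    have hp' : ¬ (wOne L p.1 p.2 ∨ wOne L p.2 p.1) := fun hcon => hp (mem_WPs.mpr hcon)
    push_neg at hp'
    obtain ⟨hw1, hw2⟩ := hp'
    by_cases hd1 : L ∣ p.1.val <;> by_cases hd2 : L ∣ p.2.val
    · simp only [hχ, hρ, if_pos hd1, if_pos hd2, sub_self, add_zero]
    · have hnw : ∀ j : ℕ, 1 ≤ j → j < L → p.2 ≠ p.1 + (j:ℕ) := by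
        intro j hj1 hjL hcon
        exact hw1 ⟨hd1, j, hj1, hjL, hcon⟩
      have hcz := (chi_zero hL2 hd1 hd2 hnw).1
      simp only [hχ, hρ, if_pos hd1, if_neg hd2]
      rw [show ((p.1.val:ℤ) - (p.2.val:ℤ) + ((L:ℤ) - 0)) = ((p.1.val:ℤ) - p.2.val + L) by ring]
      rw [hcz, sub_self]
    · have hnw : ∀ j : ℕ, 1 ≤ j → j < L → p.1 ≠ p.2 + (j:ℕ) := by
        intro j hj1 hjL hcon
        exact hw2 ⟨hd2, j, hj1, hjL, hcon⟩
      have hcz := (chi_zero hL2 hd2 hd1 hnw).2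
      simp only [hχ, hρ, if_neg hd1, if_pos hd2]
      rw [show ((p.1.val:ℤ) - (p.2.val:ℤ) + (0 - (L:ℤ))) = ((p.1.val:ℤ) - p.2.val - L) by ring]
      rw [hcz, sub_self]
    · simp only [hχ, hρ, if_neg hd1, if_neg hd2, sub_self, add_zero]
  rw [Finset.sum_congr rfl (fun p _ => hterm p)]
  exact lemmaB_core hL z χ hzsum hχW hχ0
end

lemma emod_eq_of_dvd_sub {n : ℕ} {a b : ℤ} (h : ((n:ℕ):ℤ) ∣ a - b) (h0 : 0 ≤ b)
    (h1 : b < ((n:ℕ):ℤ)) : a % ((n:ℕ):ℤ) = b := by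
  obtain ⟨k, hk⟩ := h
  have ha : a = b + (n:ℤ) * k := by linarith
  rw [ha, Int.add_mul_emod_self_left, Int.emod_eq_of_lt h0 h1]

lemma OPT_lower {L : ℕ} (hL : 6 ≤ L) {s : List (ZMod (L*L) × ZMod (L*L))}
    (hadj : ∀ e ∈ s, (cycleG (L*L)).Adj e.1 e.2)
    (hs : applySwaps (Equiv.refl (ZMod (L*L))) s = shPerm L (by omega)) :
    (2*((L*L:ℕ):ℤ) - 5*(L:ℤ) + 3) ≤ (s.length : ℤ) := by
  haveI : NeZero (L*L) := ⟨by positivity⟩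
  have hL2 : 2 ≤ L := by omega
  have hn2 : 2 ≤ L*L := by nlinarith
  have hLn : L < L*L := by nlinarith
  have hcompat : ∀ t : ZMod (L*L), ((((t.val:ℕ):ℤ) : ℤ) : ZMod (L*L)) = (Equiv.refl _) t := by
    intro t
    push_cast
    exact self_cast t
  obtain ⟨x', hc', hsum', hΦ⟩ := crossing_bound hn2 s hadj (Equiv.refl _)
    (fun t => ((t.val:ℕ):ℤ)) hcompat
  rw [hs] at hc'
  set d : ZMod (L*L) → ℤ := fun t => x' t - ((t.val:ℕ):ℤ) with hd
  have hsumd : ∑ t, d t = 0 := by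
    simp only [hd]
    rw [Finset.sum_sub_distrib, hsum', sub_self]
  have hmodd : ∀ t : ZMod (L*L), d t % ((L*L:ℕ):ℤ) = if L ∣ t.val then (L:ℤ) else 0 := by
    intro t
    by_cases hdvd : L ∣ t.val
    · rw [if_pos hdvd]
      have hπ : shPerm L hL2 t = t + (L : ZMod (L*L)) := by rw [shPerm_apply L hL2, if_pos hdvd]
      have hzero : ((d t - (L:ℤ) : ℤ) : ZMod (L*L)) = 0 := by
        push_cast [hd]
        rw [hc' t, self_cast t]
        have : shPerm L (by omega : 2 ≤ L) = shPerm L hL2 := rfl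
        rw [this, hπ]
        ring
      have hdvd2 := (ZMod.intCast_zmod_eq_zero_iff_dvd _ _).mp hzero
      exact emod_eq_of_dvd_sub hdvd2 (by positivity) (by exact_mod_cast hLn)
    · rw [if_neg hdvd]
      have hπ : shPerm L hL2 t = t := by rw [shPerm_apply L hL2, if_neg hdvd]
      have hzero : ((d t - (0:ℤ) : ℤ) : ZMod (L*L)) = 0 := by
        push_cast [hd]
        rw [hc' t, self_cast t]
        have : shPerm L (by omega : 2 ≤ L) = shPerm L hL2 := rfl
        rw [this, hπ]
        ring
      have hdvd2 := (ZMod.intCast_zmod_eq_zero_iff_dvd _ _).mp hzero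
      exact emod_eq_of_dvd_sub hdvd2 (by norm_num)
        (by exact_mod_cast Nat.pos_of_ne_zero (by positivity))
  have hBB := lemmaB hL d hsumd hmodd
  have heq : (∑ p : ZMod (L*L) × ZMod (L*L),
      |((p.1.val:ℤ) - (p.2.val:ℤ))/((L*L:ℕ):ℤ) -
        (((p.1.val:ℤ) + d p.1) - ((p.2.val:ℤ) + d p.2))/((L*L:ℕ):ℤ)|)
      = ∑ p : ZMod (L*L) × ZMod (L*L),
        |(((p.1.val:ℕ):ℤ) - ((p.2.val:ℕ):ℤ))/((L*L:ℕ):ℤ) - (x' p.1 - x' p.2)/((L*L:ℕ):ℤ)| := by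
    refine Finset.sum_congr rfl (fun p _ => ?_)
    have e1 : ((p.1.val:ℤ) + d p.1) - ((p.2.val:ℤ) + d p.2) = x' p.1 - x' p.2 := by
      simp only [hd]
      ring
    rw [e1]
  rw [heq] at hBB
  have hfinal : 4*((L*L:ℕ):ℤ) - 10*(L:ℤ) + 6 ≤ 2 * (s.length:ℤ) := le_trans hBB hΦ
  omega

theorem stmt3 :
    (∀ p q : ℕ, 2 ≤ p → 1 ≤ q → ∀ π : Equiv.Perm (ZMod (p * q)),
        IsShiftPerm p q π → totalCycle (p * q) π = p * q) ∧
    (∀ δ : ℝ, 0 < δ → ∃ p q : ℕ, 2 ≤ p ∧ 1 ≤ q ∧ ∃ π : Equiv.Perm (ZMod (p * q)),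
        IsShiftPerm p q π ∧
        (2 - δ) * (totalCycle (p * q) π : ℝ) <
          (swOPT (cycleG (p * q)) (Equiv.refl (ZMod (p * q))) π : ℝ)) := by
  constructor
  · exact part1
  · intro δ hδ
    set L : ℕ := max 6 (Nat.ceil (5/δ)) with hLdef
    have hL6 : 6 ≤ L := le_max_left _ _
    have hL2 : 2 ≤ L := by omega
    have hLδ : 5/δ ≤ (L:ℝ) := by
      calc (5:ℝ)/δ ≤ (Nat.ceil (5/δ) : ℝ) := Nat.le_ceil _
        _ ≤ (L:ℝ) := by exact_mod_cast le_max_right _ _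
    have hδL : 5 ≤ δ * L := by
      rw [div_le_iff₀ hδ] at hLδ
      linarith [hLδ]
    refine ⟨L, L, by omega, by omega, shPerm L hL2, shPerm_shift L hL2, ?_⟩
    have htot : totalCycle (L*L) (shPerm L hL2) = L*L :=
      part1 L L hL2 (by omega) _ (shPerm_shift L hL2)
    rw [htot]
    -- lower bound on swOPT
    set S : Set ℕ := {k | ∃ s : List (ZMod (L*L) × ZMod (L*L)),
      (∀ e ∈ s, (cycleG (L*L)).Adj e.1 e.2) ∧
        applySwaps (Equiv.refl (ZMod (L*L))) s = shPerm L hL2 ∧ s.length = k} with hS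
    have hne : S.Nonempty := by
      obtain ⟨s, hadj, hs⟩ := exists_swapList (by nlinarith : 2 ≤ L*L) (shPerm L hL2)
      exact ⟨s.length, s, hadj, hs, rfl⟩
    have hKmem : sInf S ∈ S := Nat.sInf_mem hne
    obtain ⟨s, hadj, hs, hlen⟩ := hKmem
    have hbound : (2*((L*L:ℕ):ℤ) - 5*(L:ℤ) + 3) ≤ ((sInf S : ℕ) : ℤ) := by
      rw [← hlen]
      exact OPT_lower hL6 hadj (by rw [hs])
    have hswopt : swOPT (cycleG (L*L)) (Equiv.refl (ZMod (L*L))) (shPerm L hL2) = sInf S := rfl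
    rw [hswopt]
    have hboundR : (2*((L*L:ℕ):ℝ) - 5*(L:ℝ) + 3) ≤ ((sInf S : ℕ) : ℝ) := by
      exact_mod_cast hbound
    have hNN : ((L*L : ℕ):ℝ) = (L:ℝ) * L := by push_cast; ring
    have hδN : 5 * (L:ℝ) ≤ δ * ((L*L:ℕ):ℝ) := by
      rw [hNN]
      have hL0 : (0:ℝ) ≤ L := by positivity
      nlinarith [hδL]
    have hcast : ((L*L:ℕ):ℝ) = ((L:ℕ):ℝ) * ((L:ℕ):ℝ) := hNN
    calc (2 - δ) * ((L*L : ℕ):ℝ) = 2*((L*L:ℕ):ℝ) - δ*((L*L:ℕ):ℝ) := by ring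
      _ ≤ 2*((L*L:ℕ):ℝ) - 5*(L:ℝ) := by linarith
      _ < 2*((L*L:ℕ):ℝ) - 5*(L:ℝ) + 3 := by linarith
      _ ≤ _ := hboundR
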